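/- arXiv:2305.04204 — 2 statements merged into one kernel-verified Lean document; each statement's English description precedes it below -/
import Mathlib

section
/- Two tropical polynomials in n variables define the same function on ℝ^n if and only if they define the same function on all of T^n (where T = ℝ ∪ {-∞}). Equivalently, the congruence of functional equality on ℝ^n equals the congruence of functional equality on T^n for T[X_1,…,X_n]. -/
noncomputable section

/-- The tropical semifield `T = ℝ ∪ {-∞}` with max-plus operations. -/
abbrev T : Type := Tropical (WithTop ℝᵒᵈ)

/-- The inclusion `ℝ → T`. -/
def toT (r : ℝ) : T := Tropical.trop ((OrderDual.toDual r : ℝᵒᵈ) : WithTop ℝᵒᵈ)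

namespace TropAux
open Tropical MvPolynomial Finset

lemma toT_ne_zero (r : ℝ) : toT r ≠ 0 := by
  intro h
  have := congrArg Tropical.untrop h
  simp [toT, Tropical.untrop_zero] at this

lemma toT_injective : Function.Injective toT := by
  intro r s h
  have := congrArg Tropical.untrop h
  simpa [toT] using this

lemma zero_or_toT (a : T) : a = 0 ∨ ∃ r : ℝ, a = toT r := by
  by_cases h : Tropical.untrop a = ⊤
  · left
    have := congrArg Tropical.trop h
    simpa [Tropical.trop_untrop, Tropical.trop_top] using this
  · right
    obtain ⟨r, hr⟩ := WithTop.ne_top_iff_exists.mp h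
    exact ⟨OrderDual.ofDual r, by
      have := congrArg Tropical.trop hr
      simpa [Tropical.trop_untrop, toT] using this.symm⟩

/-- The valuation `T → EReal`. -/
noncomputable def V (a : T) : EReal :=
  if h : a = 0 then ⊥ else ((Classical.choose ((zero_or_toT a).resolve_left h) : ℝ) : EReal)

@[simp] lemma V_zero : V (0 : T) = ⊥ := by simp [V]

@[simp] lemma V_toT (r : ℝ) : V (toT r) = (r : EReal) := by
  have h : toT r ≠ 0 := toT_ne_zero r
  rw [V, dif_neg h]
  have hs := Classical.choose_spec ((zero_or_toT (toT r)).resolve_left h)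
  rw [toT_injective hs.symm]

lemma V_injective : Function.Injective V := by
  intro a b h
  rcases zero_or_toT a with ha | ⟨r, ha⟩ <;> rcases zero_or_toT b with hb | ⟨s, hb⟩ <;>
      subst ha <;> subst hb <;> simp_all

lemma V_ne_top (a : T) : V a ≠ ⊤ := by
  rcases zero_or_toT a with ha | ⟨r, ha⟩ <;> subst ha <;> simp

lemma toT_mul (r s : ℝ) : toT r * toT s = toT (r + s) := by
  simp [toT, ← Tropical.trop_add, ← WithTop.coe_add]

@[simp] lemma V_one : V (1 : T) = 0 := by
  have h : (1 : T) = toT 0 := by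
    apply Tropical.untrop_injective
    simp [toT]
  rw [h, V_toT]; norm_num

lemma V_mul (a b : T) : V (a * b) = V a + V b := by
  rcases zero_or_toT a with ha | ⟨r, ha⟩ <;> rcases zero_or_toT b with hb | ⟨s, hb⟩ <;>
      subst ha <;> subst hb
  · simp
  · simp
  · simp
  · rw [toT_mul]; simp [EReal.coe_add]

lemma toT_add (r s : ℝ) : toT r + toT s = toT (max r s) := by
  apply Tropical.untrop_injective
  rw [Tropical.untrop_add]
  simp only [toT, Tropical.untrop_trop]
  rw [← WithTop.coe_min]
  congr 1

lemma coe_max (r s : ℝ) : ((max r s : ℝ) : EReal) = max (r : EReal) (s : EReal) := by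
  rcases le_total r s with h | h <;>
    simp [max_eq_right, max_eq_left, h, EReal.coe_le_coe_iff]

lemma V_add (a b : T) : V (a + b) = max (V a) (V b) := by
  rcases zero_or_toT a with ha | ⟨r, ha⟩ <;> rcases zero_or_toT b with hb | ⟨s, hb⟩ <;>
      subst ha <;> subst hb
  · simp
  · simp
  · simp
  · rw [toT_add, V_toT, V_toT, V_toT, coe_max]

lemma V_pow (a : T) (k : ℕ) : V (a ^ k) = k • V a := by
  induction k with
  | zero => simp
  | succ k ih => rw [pow_succ, V_mul, ih, _root_.succ_nsmul]

lemma V_sum {ι : Type*} (s : Finset ι) (h : ι → T) :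
    V (∑ i ∈ s, h i) = s.sup fun i => V (h i) := by
  induction s using Finset.cons_induction with
  | empty => simp
  | cons a s ha ih =>
    rw [Finset.sum_cons, V_add, ih, Finset.sup_cons]

lemma V_prod {ι : Type*} (s : Finset ι) (h : ι → T) :
    V (∏ i ∈ s, h i) = ∑ i ∈ s, V (h i) := by
  induction s using Finset.cons_induction with
  | empty => simp
  | cons a s ha ih => rw [Finset.prod_cons, V_mul, ih, Finset.sum_cons]

lemma V_eval {n : ℕ} (z : Fin n → T) (f : MvPolynomial (Fin n) T) :
    V (MvPolynomial.eval z f) =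
      f.support.sup fun α => V (f.coeff α) + ∑ j, (α j) • V (z j) := by
  rw [MvPolynomial.eval_eq', V_sum]
  apply Finset.sup_congr rfl
  intro α _
  rw [V_mul, V_prod]
  congr 1
  exact Finset.sum_congr rfl fun j _ => V_pow _ _

lemma nsmul_coe (k : ℕ) (r : ℝ) : k • ((r : ℝ) : EReal) = (((k : ℝ) * r : ℝ) : EReal) := by
  induction k with
  | zero => simp
  | succ k ih =>
    rw [_root_.succ_nsmul, ih, ← EReal.coe_add, EReal.coe_eq_coe_iff]
    push_cast
    ring

lemma nsmul_bot {k : ℕ} (hk : k ≠ 0) : k • (⊥ : EReal) = ⊥ := by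
  cases k with
  | zero => simp at hk
  | succ k => rw [_root_.succ_nsmul, EReal.add_bot]

lemma coe_sum {ι : Type*} (s : Finset ι) (h : ι → ℝ) :
    ((∑ i ∈ s, h i : ℝ) : EReal) = ∑ i ∈ s, ((h i : ℝ) : EReal) := by
  induction s using Finset.cons_induction with
  | empty => simp
  | cons a s ha ih => rw [Finset.sum_cons, Finset.sum_cons, EReal.coe_add, ih]

/-- The value of the monomial `α` of `f` at the real point `x`, as an extended real. -/
noncomputable def rterm {n : ℕ} (f : MvPolynomial (Fin n) T) (x : Fin n → ℝ)
    (α : Fin n →₀ ℕ) : EReal :=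
  V (f.coeff α) + ((∑ j, (α j : ℝ) * x j : ℝ) : EReal)

lemma rterm_real {n : ℕ} {f : MvPolynomial (Fin n) T} {α : Fin n →₀ ℕ}
    (h : α ∈ f.support) (x : Fin n → ℝ) : ∃ m : ℝ, rterm f x α = (m : EReal) := by
  rcases zero_or_toT (f.coeff α) with hc | ⟨r, hc⟩
  · exact absurd hc (MvPolynomial.mem_support_iff.mp h)
  · exact ⟨r + ∑ j, (α j : ℝ) * x j, by rw [rterm, hc, V_toT, ← EReal.coe_add]⟩

lemma V_eval_real {n : ℕ} (f : MvPolynomial (Fin n) T) (x : Fin n → ℝ) :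
    V (MvPolynomial.eval (fun j => toT (x j)) f) = f.support.sup (rterm f x) := by
  rw [V_eval]
  apply Finset.sup_congr rfl
  intro α _
  rw [rterm]
  congr 1
  rw [coe_sum]
  exact Finset.sum_congr rfl fun j _ => by rw [V_toT, nsmul_coe]

lemma sup_eq_sup_filter {σ : Type*} {s : Finset σ} {p : σ → Prop} [DecidablePred p]
    {F G : σ → EReal} (h₁ : ∀ α ∈ s, ¬ p α → F α = ⊥)
    (h₂ : ∀ α ∈ s, p α → F α = G α) :
    s.sup F = (s.filter p).sup G := by
  apply le_antisymm
  · apply Finset.sup_le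
    intro α hα
    by_cases hp : p α
    · rw [h₂ α hα hp]
      exact Finset.le_sup (Finset.mem_filter.mpr ⟨hα, hp⟩)
    · rw [h₁ α hα hp]
      exact bot_le
  · apply Finset.sup_le
    intro α hα
    obtain ⟨hαs, hp⟩ := Finset.mem_filter.mp hα
    rw [← h₂ α hαs hp]
    exact Finset.le_sup hαs

lemma V_eval_mixed {n : ℕ} (f : MvPolynomial (Fin n) T) (i : Fin n) (x : Fin n → ℝ) :
    V (MvPolynomial.eval (fun j => if j = i then (0 : T) else toT (x j)) f) =
      (f.support.filter fun α => α i = 0).sup (rterm f x) := by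
  rw [V_eval]
  apply sup_eq_sup_filter
  · intro α _ hp
    have h1 : (∑ j, (α j) • V (if j = i then (0 : T) else toT (x j))) = ⊥ := by
      rw [← Finset.add_sum_erase _ _ (Finset.mem_univ i), if_pos rfl, V_zero,
        nsmul_bot hp, EReal.bot_add]
    rw [h1, EReal.add_bot]
  · intro α _ hp
    rw [rterm]
    congr 1
    rw [coe_sum, ← Finset.add_sum_erase _ _ (Finset.mem_univ i),
      ← Finset.add_sum_erase _ _ (Finset.mem_univ i)]
    congr 1
    · simp [hp]
    · refine Finset.sum_congr rfl fun j hj => ?_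
      rw [if_neg (Finset.ne_of_mem_erase hj), V_toT, nsmul_coe]

lemma rterm_update {n : ℕ} (f : MvPolynomial (Fin n) T) (x : Fin n → ℝ) (i : Fin n)
    (t : ℝ) (α : Fin n →₀ ℕ) :
    rterm f (Function.update x i t) α =
      rterm f (Function.update x i 0) α + (((α i : ℝ) * t : ℝ) : EReal) := by
  rw [rterm, rterm, add_assoc, ← EReal.coe_add]
  congr 2
  rw [← Finset.add_sum_erase _ _ (Finset.mem_univ i),
    ← Finset.add_sum_erase _ (fun j => (α j : ℝ) * Function.update x i 0 j) (Finset.mem_univ i)]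
  rw [Function.update_self, Function.update_self]
  have herase : ∀ j ∈ Finset.univ.erase i,
      (α j : ℝ) * Function.update x i t j = (α j : ℝ) * Function.update x i 0 j := by
    intro j hj
    rw [Function.update_of_ne (Finset.ne_of_mem_erase hj),
      Function.update_of_ne (Finset.ne_of_mem_erase hj)]
  rw [Finset.sum_congr rfl herase]
  ring

lemma rterm_congr {n : ℕ} (f : MvPolynomial (Fin n) T) {x y : Fin n → ℝ} (i : Fin n)
    (h : ∀ j, j ≠ i → x j = y j) {α : Fin n →₀ ℕ} (hα : α i = 0) :
    rterm f x α = rterm f y α := by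
  rw [rterm, rterm]
  congr 2
  rw [← Finset.add_sum_erase _ _ (Finset.mem_univ i),
    ← Finset.add_sum_erase _ (fun j => (α j : ℝ) * y j) (Finset.mem_univ i)]
  rw [hα]
  simp only [Nat.cast_zero, zero_mul]
  congr 1
  exact Finset.sum_congr rfl fun j hj => by rw [h j (Finset.ne_of_mem_erase hj)]

lemma exists_bound {n : ℕ} (f : MvPolynomial (Fin n) T) (x : Fin n → ℝ) :
    ∃ C : ℝ, ∀ α ∈ f.support, rterm f x α ≤ (C : EReal) := by
  refine ⟨(f.support.sup (rterm f x)).toReal, fun α hα => ?_⟩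
  have h2 : f.support.sup (rterm f x) ≠ ⊤ := by
    rw [← lt_top_iff_ne_top, Finset.sup_lt_iff (by exact bot_lt_top)]
    intro β hβ
    obtain ⟨m, hm⟩ := rterm_real hβ x
    rw [hm]
    exact EReal.coe_lt_top m
  exact (Finset.le_sup hα).trans (EReal.le_coe_toReal h2)

lemma core_le {n : ℕ} (f g : MvPolynomial (Fin n) T)
    (hfg : ∀ x : Fin n → ℝ,
      MvPolynomial.eval (fun j => toT (x j)) f = MvPolynomial.eval (fun j => toT (x j)) g)
    (i : Fin n) (x : Fin n → ℝ) :
    (f.support.filter fun α => α i = 0).sup (rterm f x)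
      ≤ (g.support.filter fun α => α i = 0).sup (rterm g x) := by
  by_contra hcon
  push_neg at hcon
  -- the sup on the left is attained and real
  have hne : (f.support.filter fun α => α i = 0).Nonempty := by
    rcases Finset.eq_empty_or_nonempty (f.support.filter fun α => α i = 0) with he | he
    · rw [he, Finset.sup_empty] at hcon
      exact absurd hcon (by simp)
    · exact he
  obtain ⟨α₀, hα₀, hsup⟩ := Finset.exists_mem_eq_sup _ hne (rterm f x)
  obtain ⟨hα₀s, hα₀i⟩ := Finset.mem_filter.mp hα₀
  obtain ⟨M, hM⟩ := rterm_real hα₀s x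
  -- bounds for the terms at the point `x` with `0` in slot `i`
  set x0 : Fin n → ℝ := Function.update x i 0 with hx0
  obtain ⟨Cf, hCf⟩ := exists_bound f x0
  obtain ⟨Cg, hCg⟩ := exists_bound g x0
  set C : ℝ := max Cf Cg with hC
  set t : ℝ := min (-1) (M - C - 1) with ht
  have ht1 : t ≤ -1 := min_le_left _ _
  have ht2 : t ≤ M - C - 1 := min_le_right _ _
  set y : Fin n → ℝ := Function.update x i t with hy
  have hyx : ∀ j, j ≠ i → y j = x j := fun j hj => Function.update_of_ne hj _ _
  -- any monomial with positive exponent in slot i evaluates below M at y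
  have hbad : ∀ (p : MvPolynomial (Fin n) T) (Cp : ℝ),
      (∀ α ∈ p.support, rterm p x0 α ≤ (Cp : EReal)) → Cp ≤ C →
      ∀ α ∈ p.support, α i ≠ 0 → rterm p y α < ((M : ℝ) : EReal) := by
    intro p Cp hCp hCpC α hα hαi
    have h1 : rterm p y α = rterm p x0 α + (((α i : ℝ) * t : ℝ) : EReal) :=
      rterm_update p x i t α
    have h2 : (α i : ℝ) * t ≤ t := by
      have h1le : (1 : ℝ) ≤ (α i : ℝ) := by
        exact_mod_cast Nat.one_le_iff_ne_zero.mpr hαi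
      have := mul_le_mul_of_nonpos_right h1le (by linarith : t ≤ 0)
      linarith
    have h3 : rterm p y α ≤ (Cp : EReal) + (t : EReal) := by
      rw [h1]
      exact add_le_add (hCp α hα) (EReal.coe_le_coe_iff.mpr h2)
    have h4 : (Cp : EReal) + (t : EReal) < ((M : ℝ) : EReal) := by
      rw [← EReal.coe_add, EReal.coe_lt_coe_iff]
      have : Cp ≤ C := hCpC
      linarith
    exact h3.trans_lt h4
  -- evaluate the hypothesis at y
  have hkey := congrArg V (hfg y)
  rw [V_eval_real, V_eval_real] at hkey
  -- left side is at least M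
  have hfy : ((M : ℝ) : EReal) ≤ f.support.sup (rterm f y) := by
    have : rterm f y α₀ = ((M : ℝ) : EReal) := by
      rw [rterm_congr f i hyx hα₀i, hM]
    rw [← this]
    exact Finset.le_sup hα₀s
  -- right side is less than M
  have hgy : g.support.sup (rterm g y) < ((M : ℝ) : EReal) := by
    rw [Finset.sup_lt_iff (EReal.bot_lt_coe M)]
    intro α hα
    by_cases hαi : α i = 0
    · have h1 : rterm g y α = rterm g x α := rterm_congr g i hyx hαi
      have h2 : rterm g x α ≤ (g.support.filter fun β => β i = 0).sup (rterm g x) :=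
        Finset.le_sup (Finset.mem_filter.mpr ⟨hα, hαi⟩)
      rw [h1]
      exact h2.trans_lt (by rw [hsup, hM] at hcon; exact hcon)
    · exact hbad g Cg hCg (le_max_right _ _) α hα hαi
  rw [hkey] at hfy
  exact absurd (hfy.trans_lt hgy) (lt_irrefl _)

lemma core {n : ℕ} (f g : MvPolynomial (Fin n) T)
    (hfg : ∀ x : Fin n → ℝ,
      MvPolynomial.eval (fun j => toT (x j)) f = MvPolynomial.eval (fun j => toT (x j)) g)
    (i : Fin n) (x : Fin n → ℝ) :
    MvPolynomial.eval (fun j => if j = i then (0 : T) else toT (x j)) f =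
      MvPolynomial.eval (fun j => if j = i then (0 : T) else toT (x j)) g := by
  apply V_injective
  rw [V_eval_mixed, V_eval_mixed]
  exact le_antisymm (core_le f g hfg i x) (core_le g f (fun y => (hfg y).symm) i x)

lemma main_aux {n : ℕ} (s : Finset (Fin n)) :
    ∀ f g : MvPolynomial (Fin n) T,
      (∀ x : Fin n → ℝ,
        MvPolynomial.eval (fun j => toT (x j)) f = MvPolynomial.eval (fun j => toT (x j)) g) →
      ∀ x : Fin n → T, (∀ j, x j = 0 → j ∈ s) →
        MvPolynomial.eval x f = MvPolynomial.eval x g := by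
  induction s using Finset.induction_on with
  | empty =>
    intro f g hfg x hx
    have hnz : ∀ j, x j ≠ 0 := fun j h => absurd (hx j h) (Finset.notMem_empty j)
    choose r hr using fun j => (zero_or_toT (x j)).resolve_left (hnz j)
    have hxr : x = fun j => toT (r j) := funext hr
    rw [hxr]
    exact hfg r
  | @insert i s hi ih =>
    intro f g hfg x hx
    by_cases hxi : x i = 0
    · set u : Fin n → MvPolynomial (Fin n) T := fun j => if j = i then 0 else X j with hu
      have hb : ∀ (p : MvPolynomial (Fin n) T) (z : Fin n → T),
          MvPolynomial.eval z (bind₁ u p) =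
            MvPolynomial.eval (fun j => if j = i then (0 : T) else z j) p := by
        intro p z
        show eval₂Hom (RingHom.id T) z (bind₁ u p) = _
        rw [eval₂Hom_bind₁]
        show MvPolynomial.eval (fun j => MvPolynomial.eval z (u j)) p = _
        have harg : (fun j => MvPolynomial.eval z (u j)) = fun j => if j = i then (0 : T) else z j := by
          funext j
          by_cases hj : j = i <;> simp [hu, hj]
        rw [harg]
      have hfg' : ∀ y : Fin n → ℝ,
          MvPolynomial.eval (fun j => toT (y j)) (bind₁ u f) =
            MvPolynomial.eval (fun j => toT (y j)) (bind₁ u g) := by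
        intro y
        rw [hb, hb]
        exact core f g hfg i y
      have h0 : ∀ j, Function.update x i (toT 0) j = 0 → j ∈ s := by
        intro j hj
        by_cases hji : j = i
        · subst hji
          rw [Function.update_self] at hj
          exact absurd hj (toT_ne_zero 0)
        · rw [Function.update_of_ne hji] at hj
          exact (Finset.mem_insert.mp (hx j hj)).resolve_left hji
      have h2 := ih (bind₁ u f) (bind₁ u g) hfg' (Function.update x i (toT 0)) h0
      rw [hb, hb] at h2
      have hfun : (fun j => if j = i then (0 : T) else Function.update x i (toT 0) j) = x := by
        funext j
        by_cases hj : j = i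
        · subst hj
          rw [if_pos rfl, hxi]
        · rw [if_neg hj, Function.update_of_ne hj]
      rw [hfun] at h2
      exact h2
    · exact ih f g hfg x (fun j hj => (Finset.mem_insert.mp (hx j hj)).resolve_left
        (fun e => hxi (e ▸ hj)))

end TropAux

/-- Two tropical polynomials in `n` variables define the same function on `ℝⁿ`
if and only if they define the same function on all of `Tⁿ`; i.e. the congruence of
functional equality on `ℝⁿ` equals that of functional equality on `Tⁿ`. -/
theorem stmt2 (n : ℕ) (f g : MvPolynomial (Fin n) T) :
    (∀ x : Fin n → ℝ,
        MvPolynomial.eval (fun i => toT (x i)) f = MvPolynomial.eval (fun i => toT (x i)) g)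
      ↔ (∀ x : Fin n → T, MvPolynomial.eval x f = MvPolynomial.eval x g) := by
  constructor
  · intro h x
    exact TropAux.main_aux Finset.univ f g h x (fun j _ => Finset.mem_univ j)
  · intro h x
    exact h _


end
end

section
/- Let E be a congruence on a semifield S (such as the tropical rational function semifield). Then the following are equivalent: (1) whenever (f, 0_S) ∈ E one has f = 0_S; (2) the quotient semiring S / E is a semifield; (3) E, viewed as a sub-semiring of S × S with componentwise operations, is a semifield. -/
/-- A commutative semiring is a semifield (in the sense of the paper) if `0 ≠ 1` and every
nonzero element is multiplicatively invertible. -/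
def IsSemifield (S : Type*) [CommSemiring S] : Prop :=
  (0 : S) ≠ 1 ∧ ∀ a : S, a ≠ 0 → ∃ b : S, a * b = 1

theorem aux12 {S : Type*} [Semifield S] (E : RingCon S) :
    (∀ f : S, E f 0 → f = 0) ↔ IsSemifield E.Quotient := by
  constructor
  · intro h
    constructor
    · intro h01
      have : E 0 1 := E.eq.mp h01
      exact one_ne_zero (h 1 (E.symm this))
    · intro a ha
      obtain ⟨f, rfl⟩ := Quotient.exists_rep a
      have hf : f ≠ 0 := by
        rintro rfl; exact ha rfl
      refine ⟨(f⁻¹ : S), ?_⟩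
      show ((f * f⁻¹ : S) : E.Quotient) = 1
      rw [mul_inv_cancel₀ hf]; rfl
  · rintro ⟨h01, hinv⟩ f hf0
    by_contra hf
    have hq0 : (f : E.Quotient) = 0 := E.eq.mpr hf0
    have : (1 : E.Quotient) = 0 := by
      calc (1 : E.Quotient) = ((f * f⁻¹ : S) : E.Quotient) := by
            rw [mul_inv_cancel₀ hf]; rfl
        _ = (f : E.Quotient) * (f⁻¹ : S) := rfl
        _ = 0 * (f⁻¹ : S) := by rw [hq0]
        _ = 0 := zero_mul _
    exact h01 this.symm

/-- For a congruence `E` on a semifield `S`, the following are equivalent: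
(1) `(f, 0) ∈ E` implies `f = 0`;
(2) the quotient `S / E` is a semifield;
(3) `E`, viewed as a sub-semiring of `S × S` with componentwise operations, is a semifield. -/
theorem stmt4 {S : Type*} [Semifield S] (E : RingCon S) :
    ((∀ f : S, E f 0 → f = 0) ↔ IsSemifield E.Quotient) ∧
    (IsSemifield E.Quotient ↔
      (((0 : S), (0 : S)) ≠ ((1 : S), (1 : S)) ∧
        ∀ p : S × S, E p.1 p.2 → p ≠ 0 →
          ∃ q : S × S, E q.1 q.2 ∧ p * q = 1)) := by
  have h12 := aux12 E
  have h13 : (∀ f : S, E f 0 → f = 0) ↔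
      (((0 : S), (0 : S)) ≠ ((1 : S), (1 : S)) ∧
        ∀ p : S × S, E p.1 p.2 → p ≠ 0 →
          ∃ q : S × S, E q.1 q.2 ∧ p * q = 1) := by
    constructor
    · intro h
      refine ⟨by simp [Prod.ext_iff], ?_⟩
      rintro ⟨f, g⟩ hfg hp0
      have hf : f ≠ 0 := by
        rintro rfl
        have : g = 0 := h g (E.symm hfg)
        exact hp0 (by simp [this, Prod.ext_iff])
      have hg : g ≠ 0 := by
        rintro rfl
        exact hp0 (by simp [h f hfg, Prod.ext_iff])
      refine ⟨(f⁻¹, g⁻¹), ?_, ?_⟩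
      · have := E.mul hfg (E.refl (f⁻¹ * g⁻¹))
        have h2 : E g⁻¹ f⁻¹ := by
          have e1 : f * (f⁻¹ * g⁻¹) = g⁻¹ := by
            field_simp
          have e2 : g * (f⁻¹ * g⁻¹) = f⁻¹ := by
            field_simp
          rwa [e1, e2] at this
        exact E.symm h2
      · simp [Prod.ext_iff, mul_inv_cancel₀ hf, mul_inv_cancel₀ hg]
    · rintro ⟨h01, hinv⟩ f hf0
      by_contra hf
      obtain ⟨q, hq, hpq⟩ := hinv (f, 0) hf0 (by simp [Prod.ext_iff, hf])
      have : (0 : S) * q.2 = 1 := congrArg Prod.snd hpq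
      exact zero_ne_one ((zero_mul q.2) ▸ this)
  exact ⟨h12, h12.symm.trans h13⟩
end
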